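/- Fix k ≥ 2 and let P_n = e^{-D^k/k}(X^n) on ℂ[X]. Then P_n is an eigenfunction of L₁ = X·d/dx - d^k/dx^k with eigenvalue n: X * P_n' - D^k(P_n) = n • P_n. -/

import Mathlib

open Polynomial

/-- Multiplication by `X` as a linear endomorphism of `ℂ[X]`. -/
noncomputable def Mop : Module.End ℂ ℂ[X] := LinearMap.mulLeft ℂ (X : ℂ[X])

/-- The derivative as a linear endomorphism of `ℂ[X]`. -/
noncomputable def Dop : Module.End ℂ ℂ[X] := Polynomial.derivative

/-- `H = M ∘ D`, i.e. `x·d/dx`. -/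
noncomputable def Hop : Module.End ℂ ℂ[X] := Mop * Dop

/-- `B = M ∘ D ∘ D + β • D`, i.e. `B(p) = X·p'' + β·p'`. -/
noncomputable def Bop (β : ℂ) : Module.End ℂ ℂ[X] := Mop * Dop * Dop + β • Dop

/-- The locally finite exponential `e^A p = ∑ₘ Aᵐ p / m!` of a degree-lowering
operator `A` (the series terminates, so it may be truncated at `deg p`). -/
noncomputable def expOp (A : Module.End ℂ ℂ[X]) (p : ℂ[X]) : ℂ[X] :=
  ∑ m ∈ Finset.range (p.natDegree + 1), ((Nat.factorial m : ℂ))⁻¹ • (A ^ m) p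

lemma Hop_apply (p : ℂ[X]) : Hop p = X * derivative p := by
  simp [Hop, Mop, Dop, Module.End.mul_apply, LinearMap.mulLeft_apply]

lemma HD : Hop * Dop = Dop * Hop - Dop := by
  apply LinearMap.ext; intro p
  simp [Module.End.mul_apply, Hop_apply, Dop, derivative_mul]

lemma HDk (k : ℕ) : Hop * Dop ^ k = Dop ^ k * Hop - (k:ℂ) • Dop ^ k := by
  induction k with
  | zero => simp
  | succ k ih =>
    have h1 : Hop * Dop ^ (k+1) = (Hop * Dop ^ k) * Dop := by
      rw [mul_assoc, pow_succ]
    rw [h1, ih, sub_mul, smul_mul_assoc, ← pow_succ, mul_assoc, HD, mul_sub, ← mul_assoc,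
      ← pow_succ]
    push_cast
    rw [add_smul, one_smul]
    abel

lemma hHX (n : ℕ) : Hop ((X:ℂ[X])^n) = (n:ℂ) • (X:ℂ[X])^n := by
  rw [Hop_apply, derivative_X_pow]
  cases n with
  | zero => simp
  | succ n =>
    rw [smul_eq_C_mul]
    push_cast
    ring

theorem stmt11 (k : ℕ) (hk : 2 ≤ k) (n : ℕ) :
    (X : ℂ[X]) * derivative (expOp (aeval Dop (-(C ((k : ℂ)⁻¹)) * X ^ k)) (X ^ n))
      - (Dop ^ k) (expOp (aeval Dop (-(C ((k : ℂ)⁻¹)) * X ^ k)) (X ^ n))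
      = (n : ℂ) • expOp (aeval Dop (-(C ((k : ℂ)⁻¹)) * X ^ k)) (X ^ n) := by
  have hk0 : (k:ℂ) ≠ 0 := Nat.cast_ne_zero.mpr (by omega)
  set c : ℂ := -(k:ℂ)⁻¹ with hc
  set T : ℕ → ℂ[X] := fun j => (Dop ^ (k*j)) ((X:ℂ[X])^n) with hT
  have hA : (aeval Dop (-(C ((k : ℂ)⁻¹)) * X ^ k)) = c • Dop ^ k := by
    rw [map_mul, map_neg, aeval_C, aeval_X_pow, Algebra.algebraMap_eq_smul_one, hc]
    rw [show (-((k:ℂ)⁻¹ • (1 : Module.End ℂ ℂ[X]))) = (-(k:ℂ)⁻¹) • 1 from (neg_smul ((k:ℂ)⁻¹) (1 : Module.End ℂ ℂ[X])).symm,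
      smul_mul_assoc, one_mul]
  have hpow : ∀ m : ℕ, ((c • Dop ^ k) ^ m) ((X:ℂ[X])^n) = c^m • T m := by
    intro m
    rw [_root_.smul_pow, ← pow_mul, LinearMap.smul_apply, hT]
  have hP : expOp (c • Dop ^ k) ((X:ℂ[X])^n)
      = ∑ m ∈ Finset.range (n+1), ((m.factorial : ℂ)⁻¹ * c^m) • T m := by
    unfold expOp
    rw [natDegree_X_pow]
    exact Finset.sum_congr rfl fun m _ => by rw [hpow, smul_smul]
  rw [hA, hP]
  set P : ℂ[X] := ∑ m ∈ Finset.range (n+1), ((m.factorial:ℂ)⁻¹ * c^m) • T m with hPdef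
  rw [← Hop_apply]
  have hHT : ∀ m, Hop (T m) = (n:ℂ) • T m - ((k*m : ℕ):ℂ) • T m := by
    intro m
    have h := congrArg (fun (f : Module.End ℂ ℂ[X]) => f ((X:ℂ[X])^n)) (HDk (k*m))
    simp only [Module.End.mul_apply, LinearMap.sub_apply, LinearMap.smul_apply] at h
    rw [hT]
    simp only
    rw [h, hHX, map_smul]
  have h1 : Hop P = (n:ℂ) • P
      - ∑ m ∈ Finset.range (n+1), ((m.factorial:ℂ)⁻¹ * c^m * (k*m : ℕ)) • T m := by
    rw [hPdef, map_sum, Finset.smul_sum, ← Finset.sum_sub_distrib]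
    refine Finset.sum_congr rfl fun m _ => ?_
    rw [map_smul, hHT]
    module
  have h2 : ∑ m ∈ Finset.range (n+1), ((m.factorial:ℂ)⁻¹ * c^m * (k*m : ℕ)) • T m
      = -∑ j ∈ Finset.range n, ((j.factorial:ℂ)⁻¹ * c^j) • T (j+1) := by
    rw [Finset.sum_range_succ']
    simp only [Nat.mul_zero, Nat.cast_zero, mul_zero, zero_smul, add_zero]
    rw [← Finset.sum_neg_distrib]
    refine Finset.sum_congr rfl fun j _ => ?_
    rw [← neg_smul]
    congr 1
    have hfac : ((j.factorial : ℂ)) ≠ 0 := Nat.cast_ne_zero.mpr j.factorial_ne_zero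
    have hj1 : ((j:ℂ) + 1) ≠ 0 := Nat.cast_add_one_ne_zero j
    rw [hc]
    push_cast [Nat.factorial_succ, pow_succ]
    field_simp
  have hDkT : ∀ m, (Dop^k) (T m) = T (m+1) := by
    intro m
    rw [hT]
    simp only
    rw [← Module.End.mul_apply, ← pow_add]
    congr 2
    ring
  have hT0 : T (n+1) = 0 := by
    rw [hT]
    simp only
    rw [Module.End.pow_apply]
    apply Polynomial.iterate_derivative_eq_zero
    rw [natDegree_X_pow]
    nlinarith
  have h3 : (Dop^k) P = ∑ j ∈ Finset.range n, ((j.factorial:ℂ)⁻¹ * c^j) • T (j+1) := by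
    rw [hPdef, map_sum]
    have e : ∀ m ∈ Finset.range (n+1), (Dop^k) (((m.factorial:ℂ)⁻¹ * c^m) • T m)
        = ((m.factorial:ℂ)⁻¹ * c^m) • T (m+1) := fun m _ => by rw [map_smul, hDkT]
    rw [Finset.sum_congr rfl e, Finset.sum_range_succ, hT0, smul_zero, add_zero]
  rw [h1, h2, h3]
  abel
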